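/- Let Γ denote the Gamma function, for H ∈ (1/2, 1) set c_H = √(2H·Γ(3/2−H) / (Γ(1/2+H)·Γ(2−2H))), let s < T be real numbers, and for g ∈ L²(s, T) define (G_H g)(τ) = c_H (H−1/2) ∫_τ^T (t−τ)^{H−3/2} g(t) dt for τ ∈ (s, T). Then there exists a constant c > 0 such that for all H ∈ (1/2, 1) and all g ∈ L²(s, T), ‖G_H g‖_{L²(s,T)} ≤ c ‖g‖_{L²(s,T)}. -/

import Mathlib

open Real MeasureTheory Set
open scoped ENNReal NNReal

noncomputable def cH (H : ℝ) : ℝ :=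
  Real.sqrt (2 * H * Real.Gamma (3/2 - H) / (Real.Gamma (1/2 + H) * Real.Gamma (2 - 2*H)))

noncomputable def GH (H T : ℝ) (g : ℝ → ℝ) (τ : ℝ) : ℝ :=
  cH H * (H - 1/2) * ∫ t in Set.Ioc τ T, (t - τ) ^ (H - 3/2) * g t

lemma gamma_lower {y : ℝ} (hy : 0 < y) : Real.exp (-2) / 2 ≤ Real.Gamma y := by
  rw [Real.Gamma_eq_integral hy]
  have hint : IntegrableOn (fun x : ℝ => Real.exp (-x) * x ^ (y - 1)) (Ioi 0) :=
    Real.GammaIntegral_convergent hy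
  have h1 : ∫ x in Ioc (1:ℝ) 2, Real.exp (-x) * x ^ (y - 1) ≤
      ∫ x in Ioi (0:ℝ), Real.exp (-x) * x ^ (y - 1) := by
    refine setIntegral_mono_set hint ?_ ?_
    · filter_upwards [ae_restrict_mem measurableSet_Ioi] with x hx
      exact mul_nonneg (Real.exp_pos _).le (Real.rpow_nonneg (le_of_lt hx) _)
    · filter_upwards with x hx
      exact lt_of_lt_of_le one_pos hx.1.le
  refine le_trans ?_ h1
  have h2 : Real.exp (-2) / 2 * (volume (Ioc (1:ℝ) 2)).toReal ≤
      ∫ x in Ioc (1:ℝ) 2, Real.exp (-x) * x ^ (y - 1) := by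
    refine setIntegral_ge_of_const_le_real measurableSet_Ioc (by simp) ?_
      (hint.mono_set (fun x hx => lt_of_lt_of_le one_pos hx.1.le))
    intro x hx
    have hx1 : (1:ℝ) ≤ x := hx.1.le
    have hx2 : x ≤ 2 := hx.2
    have he : Real.exp (-2) ≤ Real.exp (-x) := Real.exp_le_exp.2 (by linarith)
    have hr : (2:ℝ)⁻¹ ≤ x ^ (y - 1) := by
      have h3 : x ^ (-1 : ℝ) ≤ x ^ (y - 1) :=
        Real.rpow_le_rpow_of_exponent_le hx1 (by linarith)
      refine le_trans ?_ h3
      rw [Real.rpow_neg_one]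
      exact inv_anti₀ (by linarith) hx2
    calc Real.exp (-2) / 2 = Real.exp (-2) * (2:ℝ)⁻¹ := by ring
    _ ≤ Real.exp (-x) * x ^ (y - 1) := by
        exact mul_le_mul he hr (by positivity) (Real.exp_pos _).le
  calc Real.exp (-2) / 2 = Real.exp (-2) / 2 * (volume (Ioc (1:ℝ) 2)).toReal := by
        simp [Real.volume_Ioc]; norm_num
  _ ≤ _ := h2

lemma gamma_upper {x : ℝ} (hx : x ∈ Icc (1/2 : ℝ) 1) : Real.Gamma x ≤ Real.sqrt π := by
  have h := Real.convexOn_Gamma.le_max_of_mem_Icc (by norm_num : (1/2:ℝ) ∈ Ioi (0:ℝ))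
    (by norm_num : (1:ℝ) ∈ Ioi (0:ℝ)) hx
  rw [Real.Gamma_one_half_eq, Real.Gamma_one] at h
  refine h.trans (max_le le_rfl ?_)
  rw [show (1:ℝ) = Real.sqrt 1 from (Real.sqrt_one).symm]
  exact Real.sqrt_le_sqrt (by linarith [Real.pi_gt_three])

lemma lint_kernel_right {α : ℝ} (hα : 0 < α) {a b : ℝ} (hab : a ≤ b) :
    ∫⁻ t in Ioc a b, ENNReal.ofReal ((t - a) ^ (α - 1)) = ENNReal.ofReal ((b - a) ^ α / α) := by
  have hi : IntervalIntegrable (fun t : ℝ => (t - a) ^ (α - 1)) volume a b := by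
    have h0 : IntervalIntegrable (fun x : ℝ => x ^ (α - 1)) volume 0 (b - a) :=
      intervalIntegral.intervalIntegrable_rpow' (by linarith)
    have := h0.comp_sub_right a
    first | simpa using this | simpa using this.symm
  have hInt : IntegrableOn (fun t : ℝ => (t - a) ^ (α - 1)) (Ioc a b) volume :=
    (intervalIntegrable_iff_integrableOn_Ioc_of_le hab).1 hi
  rw [← ofReal_integral_eq_lintegral_ofReal hInt ?_]
  · congr 1
    rw [← intervalIntegral.integral_of_le hab]
    rw [show (fun t : ℝ => (t - a) ^ (α - 1)) = fun t : ℝ => ((fun x : ℝ => x ^ (α - 1)) (t - a)) from rfl]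
    rw [intervalIntegral.integral_comp_sub_right (fun x : ℝ => x ^ (α - 1)) a, sub_self]
    rw [integral_rpow (Or.inl (by linarith))]
    rw [Real.zero_rpow (by linarith : α - 1 + 1 ≠ 0)]
    ring_nf
  · filter_upwards [ae_restrict_mem measurableSet_Ioc] with t ht
    exact Real.rpow_nonneg (by linarith [ht.1]) _

lemma lint_kernel_left {α : ℝ} (hα : 0 < α) {a b : ℝ} (hab : a ≤ b) :
    ∫⁻ x in Ioo a b, ENNReal.ofReal ((b - x) ^ (α - 1)) = ENNReal.ofReal ((b - a) ^ α / α) := by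
  rw [setLIntegral_congr Ioo_ae_eq_Ioc]
  have hi : IntervalIntegrable (fun x : ℝ => (b - x) ^ (α - 1)) volume a b := by
    have h0 : IntervalIntegrable (fun x : ℝ => x ^ (α - 1)) volume 0 (b - a) :=
      intervalIntegral.intervalIntegrable_rpow' (by linarith)
    have := h0.comp_sub_left b
    first | simpa using this | simpa using this.symm
  have hInt : IntegrableOn (fun x : ℝ => (b - x) ^ (α - 1)) (Ioc a b) volume :=
    (intervalIntegrable_iff_integrableOn_Ioc_of_le hab).1 hi
  rw [← ofReal_integral_eq_lintegral_ofReal hInt ?_]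
  · congr 1
    rw [← intervalIntegral.integral_of_le hab]
    rw [show (fun x : ℝ => (b - x) ^ (α - 1)) = fun x : ℝ => ((fun u : ℝ => u ^ (α - 1)) (b - x)) from rfl]
    rw [intervalIntegral.integral_comp_sub_left (fun u : ℝ => u ^ (α - 1)) b, sub_self]
    rw [integral_rpow (Or.inl (by linarith))]
    rw [Real.zero_rpow (by linarith : α - 1 + 1 ≠ 0)]
    ring_nf
  · filter_upwards [ae_restrict_mem measurableSet_Ioc] with t ht
    exact Real.rpow_nonneg (by linarith [ht.2]) _

lemma rpow_le_M {L x α : ℝ} (hx : 0 ≤ x) (hxL : x ≤ L) (hα : 0 < α) (hα2 : α ≤ 1/2) :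
    x ^ α ≤ max 1 (Real.sqrt L) := by
  rcases le_or_gt x 1 with h | h
  · exact le_max_of_le_left (Real.rpow_le_one hx h hα.le)
  · refine le_max_of_le_right ?_
    calc x ^ α ≤ x ^ (1/2 : ℝ) := Real.rpow_le_rpow_of_exponent_le h.le hα2
    _ = Real.sqrt x := (Real.sqrt_eq_rpow x).symm
    _ ≤ Real.sqrt L := Real.sqrt_le_sqrt hxL

noncomputable def C0 : ℝ := Real.sqrt (2 * Real.sqrt π / (Real.exp (-2) / 2)^2)

lemma C0_pos : 0 < C0 := by
  apply Real.sqrt_pos.2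
  have := Real.pi_pos
  positivity

lemma cH_le_C0 {H : ℝ} (hH : H ∈ Ioo (1/2 : ℝ) 1) : cH H ≤ C0 := by
  obtain ⟨h1, h2⟩ := hH
  set γ : ℝ := Real.exp (-2) / 2 with hγ
  have hγpos : 0 < γ := by positivity
  have hA : Real.Gamma (1/2 + H) ≥ γ := gamma_lower (by linarith)
  have hB : Real.Gamma (2 - 2*H) ≥ γ := gamma_lower (by linarith)
  have hC : Real.Gamma (3/2 - H) ≤ Real.sqrt π := gamma_upper ⟨by linarith, by linarith⟩
  have hCpos : 0 < Real.Gamma (3/2 - H) := Real.Gamma_pos_of_pos (by linarith)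
  apply Real.sqrt_le_sqrt
  have hnum : 2 * H * Real.Gamma (3/2 - H) ≤ 2 * Real.sqrt π := by
    calc 2 * H * Real.Gamma (3/2 - H) ≤ 2 * 1 * Real.Gamma (3/2 - H) := by nlinarith
    _ ≤ 2 * Real.sqrt π := by nlinarith
  have hden : γ^2 ≤ Real.Gamma (1/2 + H) * Real.Gamma (2 - 2*H) := by nlinarith
  have hd0 : 0 < Real.Gamma (1/2 + H) * Real.Gamma (2 - 2*H) := by nlinarith
  calc 2 * H * Real.Gamma (3/2 - H) / (Real.Gamma (1/2 + H) * Real.Gamma (2 - 2*H))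
      ≤ 2 * Real.sqrt π / γ^2 := by
        apply div_le_div₀ (by positivity) hnum (by positivity) hden
  _ = 2 * Real.sqrt π / (Real.exp (-2) / 2)^2 := by rw [hγ]

lemma main_estimate {s T H : ℝ} (hsT : s < T) (hH : H ∈ Ioo (1/2:ℝ) 1) {g : ℝ → ℝ}
    (hgm : Measurable g) :
    eLpNorm (GH H T g) 2 (volume.restrict (Ioo s T)) ≤
      ENNReal.ofReal (C0 * max 1 (Real.sqrt (T - s))) * eLpNorm g 2 (volume.restrict (Ioo s T)) := by
  obtain ⟨hH1, hH2⟩ := hH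
  set α : ℝ := H - 1/2 with hαdef
  have hα : 0 < α := by rw [hαdef]; linarith
  have hα2 : α ≤ 1/2 := by rw [hαdef]; linarith
  set M : ℝ := max 1 (Real.sqrt (T - s)) with hMdef
  have hM1 : (1:ℝ) ≤ M := le_max_left _ _
  have hker : ∀ {a b : ℝ}, a ≤ b → b - a ≤ T - s →
      ENNReal.ofReal ((b - a) ^ α / α) ≤ ENNReal.ofReal (M / α) := by
    intro a b hab h2
    apply ENNReal.ofReal_le_ofReal
    gcongr
    exact rpow_le_M (by linarith) h2 hα hα2
  set k : ℝ → ℝ → ℝ≥0∞ := fun τ t => ENNReal.ofReal ((t - τ) ^ (α - 1)) with hk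
  set Gq : ℝ → ℝ≥0∞ := fun τ => ∫⁻ t in Ioc τ T, k τ t * (‖g t‖₊ : ℝ≥0∞) ^ (2:ℝ) with hGq
  set B : ℝ≥0∞ := ENNReal.ofReal (M / α) with hB
  have hBne : B ≠ ∞ := ENNReal.ofReal_ne_top
  have hAnn : 0 ≤ cH H * α := mul_nonneg (Real.sqrt_nonneg _) hα.le
  set A : ℝ≥0∞ := ENNReal.ofReal (cH H * α) with hA
  have hAne : A ≠ ∞ := ENNReal.ofReal_ne_top
  have hexp : H - 3/2 = α - 1 := by rw [hαdef]; ring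
  have hexp2 : H - 1/2 = α := by rw [hαdef]
  -- Step 1: pointwise bound on the norm of GH
  have hpt : ∀ τ, τ ∈ Ioo s T → (‖GH H T g τ‖₊ : ℝ≥0∞) ≤
      A * ∫⁻ t in Ioc τ T, k τ t * (‖g t‖₊ : ℝ≥0∞) := by
    intro τ hτ
    have h3 : ∫⁻ t in Ioc τ T, (‖(t - τ) ^ (H - 3/2) * g t‖₊ : ℝ≥0∞) ∂volume
        = ∫⁻ t in Ioc τ T, k τ t * (‖g t‖₊ : ℝ≥0∞) ∂volume := by
      apply setLIntegral_congr_fun measurableSet_Ioc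
      refine fun t ht => ?_
      beta_reduce
      rw [nnnorm_mul, ENNReal.coe_mul, hk]
      congr 1
      rw [← enorm_eq_nnnorm, ← ofReal_norm, hexp,
        Real.norm_of_nonneg (Real.rpow_nonneg (by linarith [ht.1]) _)]
    calc (‖GH H T g τ‖₊ : ℝ≥0∞)
        = (‖cH H * (H - 1/2)‖₊ : ℝ≥0∞) * ‖∫ t in Ioc τ T, (t - τ) ^ (H - 3/2) * g t‖₊ := by
          rw [GH, nnnorm_mul, ENNReal.coe_mul]
      _ ≤ A * ∫⁻ t in Ioc τ T, (‖(t - τ) ^ (H - 3/2) * g t‖₊ : ℝ≥0∞) ∂volume := by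
          apply mul_le_mul'
          · rw [hA, ← enorm_eq_nnnorm, ← ofReal_norm, hexp2, Real.norm_of_nonneg hAnn]
          · exact enorm_integral_le_lintegral_enorm _
      _ = A * ∫⁻ t in Ioc τ T, k τ t * (‖g t‖₊ : ℝ≥0∞) ∂volume := by rw [h3]
  -- Step 2: Cauchy-Schwarz
  have hkm : ∀ τ : ℝ, Measurable (k τ) := fun τ =>
    ((measurable_id.sub_const τ).pow measurable_const).ennreal_ofReal
  have hCS : ∀ τ, τ ∈ Ioo s T →
      (∫⁻ t in Ioc τ T, k τ t * (‖g t‖₊ : ℝ≥0∞)) ≤ B ^ (1/2:ℝ) * (Gq τ) ^ (1/2:ℝ) := by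
    intro τ hτ
    have hgem : Measurable fun t : ℝ => (‖g t‖₊ : ℝ≥0∞) := hgm.nnnorm.coe_nnreal_ennreal
    have hhalf : ∀ x : ℝ≥0∞, x ^ (1/2:ℝ) * x ^ (1/2:ℝ) = x := by
      intro x
      rw [← ENNReal.rpow_add_of_nonneg _ _ (by norm_num) (by norm_num)]
      norm_num
    have hCS0 := ENNReal.lintegral_mul_le_Lp_mul_Lq (volume.restrict (Ioc τ T))
      (Real.HolderConjugate.two_two : Real.HolderConjugate 2 2)
      ((hkm τ).pow measurable_const).aemeasurable
      (((hkm τ).pow measurable_const).mul hgem).aemeasurable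
      (f := fun t => k τ t ^ (1/2:ℝ)) (g := fun t => k τ t ^ (1/2:ℝ) * (‖g t‖₊ : ℝ≥0∞))
    have he1 : ∀ t : ℝ, ((fun t => k τ t ^ (1/2:ℝ)) * fun t => k τ t ^ (1/2:ℝ) * (‖g t‖₊ : ℝ≥0∞)) t
        = k τ t * (‖g t‖₊ : ℝ≥0∞) := by
      intro t
      simp only [Pi.mul_apply]
      rw [← mul_assoc, hhalf]
    have he2 : ∀ t : ℝ, (k τ t ^ (1/2:ℝ)) ^ (2:ℝ) = k τ t := by
      intro t; rw [← ENNReal.rpow_mul]; norm_num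
    have he3 : ∀ t : ℝ, (k τ t ^ (1/2:ℝ) * (‖g t‖₊ : ℝ≥0∞)) ^ (2:ℝ)
        = k τ t * (‖g t‖₊ : ℝ≥0∞) ^ (2:ℝ) := by
      intro t
      rw [ENNReal.mul_rpow_of_nonneg _ _ (by norm_num), ← ENNReal.rpow_mul]
      norm_num
    simp only [he1, he2, he3] at hCS0
    refine hCS0.trans ?_
    gcongr
    rw [hk]
    rw [lint_kernel_right hα hτ.2.le, hB]
    exact hker hτ.2.le (by linarith [hτ.1])
  -- Step 3: squared pointwise bound
  have hsq : ∀ τ, τ ∈ Ioo s T → (‖GH H T g τ‖₊ : ℝ≥0∞) ^ (2:ℝ) ≤ A ^ (2:ℝ) * B * Gq τ := by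
    intro τ hτ
    have h := (hpt τ hτ).trans (mul_le_mul_right (hCS τ hτ) A)
    have h2 := ENNReal.rpow_le_rpow h (by norm_num : (0:ℝ) ≤ 2)
    refine h2.trans (le_of_eq ?_)
    rw [ENNReal.mul_rpow_of_nonneg _ _ (by norm_num : (0:ℝ) ≤ 2),
      ENNReal.mul_rpow_of_nonneg _ _ (by norm_num : (0:ℝ) ≤ 2),
      ← ENNReal.rpow_mul B, ← ENNReal.rpow_mul (Gq τ)]
    norm_num
    ring
  -- Step 4: integrate
  have hABne : A ^ (2:ℝ) * B ≠ ∞ :=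
    ENNReal.mul_ne_top (ENNReal.rpow_ne_top_of_nonneg (by norm_num) hAne) hBne
  have hX : ∫⁻ τ in Ioo s T, (‖GH H T g τ‖₊ : ℝ≥0∞) ^ (2:ℝ) ∂volume
      ≤ A ^ (2:ℝ) * B * ∫⁻ τ in Ioo s T, Gq τ ∂volume := by
    rw [← lintegral_const_mul' _ _ hABne]
    apply lintegral_mono_ae
    filter_upwards [ae_restrict_mem measurableSet_Ioo] with τ hτ using hsq τ hτ
  -- Step 5: Tonelli
  set S : Set (ℝ × ℝ) := {p : ℝ × ℝ | p.1 < p.2} ∩ {p : ℝ × ℝ | p.2 ≤ T} with hS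
  have hSm : MeasurableSet S :=
    (measurableSet_lt measurable_fst measurable_snd).inter (measurable_snd measurableSet_Iic)
  set Φ : ℝ × ℝ → ℝ≥0∞ := S.indicator
    (fun q => ENNReal.ofReal ((q.2 - q.1) ^ (α - 1)) * (‖g q.2‖₊ : ℝ≥0∞) ^ (2:ℝ)) with hΦ
  have hΦm : Measurable Φ := by
    apply Measurable.indicator _ hSm
    exact (((measurable_snd.sub measurable_fst).pow measurable_const).ennreal_ofReal).mul
      (((hgm.comp measurable_snd).nnnorm.coe_nnreal_ennreal).pow measurable_const)
  have hmemS : ∀ τ t : ℝ, (τ, t) ∈ S ↔ (τ < t ∧ t ≤ T) := by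
    intro τ t; rw [hS]; simp [Set.mem_setOf_eq]
  have hGqeq : ∀ τ : ℝ, Gq τ = ∫⁻ t, Φ (τ, t) ∂volume := by
    intro τ
    simp only [hGq]
    rw [← lintegral_indicator measurableSet_Ioc]
    congr 1
  have hswap : ∫⁻ τ in Ioo s T, Gq τ ∂volume
      = ∫⁻ t, ∫⁻ τ in Ioo s T, Φ (τ, t) ∂volume ∂volume := by
    simp_rw [hGqeq]
    exact lintegral_lintegral_swap hΦm.aemeasurable
  have hinner : ∀ t : ℝ, (∫⁻ τ in Ioo s T, Φ (τ, t) ∂volume) ≤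
      (Ioc s T).indicator (fun t => B * (‖g t‖₊ : ℝ≥0∞) ^ (2:ℝ)) t := by
    intro t
    by_cases ht : t ∈ Ioc s T
    · rw [Set.indicator_of_mem ht]
      calc ∫⁻ τ in Ioo s T, Φ (τ, t) ∂volume
          ≤ ∫⁻ τ in Ioo s T, (Ioo s t).indicator
              (fun τ => ENNReal.ofReal ((t - τ) ^ (α - 1)) * (‖g t‖₊ : ℝ≥0∞) ^ (2:ℝ)) τ ∂volume := by
            apply lintegral_mono_ae
            filter_upwards [ae_restrict_mem measurableSet_Ioo] with τ hτ
            by_cases hcond : τ < t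
            · rw [hΦ, Set.indicator_of_mem ((hmemS τ t).2 ⟨hcond, ht.2⟩),
                Set.indicator_of_mem (Set.mem_Ioo.2 ⟨hτ.1, hcond⟩)]
            · rw [hΦ, Set.indicator_of_notMem (fun hm => hcond ((hmemS τ t).1 hm).1)]
              exact zero_le
        _ ≤ ∫⁻ τ, (Ioo s t).indicator
              (fun τ => ENNReal.ofReal ((t - τ) ^ (α - 1)) * (‖g t‖₊ : ℝ≥0∞) ^ (2:ℝ)) τ ∂volume :=
            setLIntegral_le_lintegral _ _
        _ = ∫⁻ τ in Ioo s t, ENNReal.ofReal ((t - τ) ^ (α - 1)) * (‖g t‖₊ : ℝ≥0∞) ^ (2:ℝ) ∂volume :=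
            lintegral_indicator measurableSet_Ioo _
        _ = (∫⁻ τ in Ioo s t, ENNReal.ofReal ((t - τ) ^ (α - 1)) ∂volume) * (‖g t‖₊ : ℝ≥0∞) ^ (2:ℝ) :=
            lintegral_mul_const' _ _ (ENNReal.rpow_ne_top_of_nonneg (by norm_num) ENNReal.coe_ne_top)
        _ = ENNReal.ofReal ((t - s) ^ α / α) * (‖g t‖₊ : ℝ≥0∞) ^ (2:ℝ) := by
            rw [lint_kernel_left hα ht.1.le]
        _ ≤ B * (‖g t‖₊ : ℝ≥0∞) ^ (2:ℝ) :=
            mul_le_mul_left (hker ht.1.le (by linarith [ht.2])) _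
    · rw [Set.indicator_of_notMem ht]
      refine le_of_eq ?_
      have hz : ∀ τ ∈ Ioo s T, Φ (τ, t) = 0 := by
        intro τ hτ
        rw [hΦ]
        apply Set.indicator_of_notMem
        intro hm
        obtain ⟨h1, h2⟩ := (hmemS τ t).1 hm
        rw [Set.mem_Ioc] at ht
        push_neg at ht
        rcases lt_or_ge s t with hst | hst
        · exact absurd h2 (not_le.2 (ht hst))
        · linarith [hτ.1]
      calc ∫⁻ τ in Ioo s T, Φ (τ, t) ∂volume
          = ∫⁻ τ in Ioo s T, 0 ∂volume :=
            setLIntegral_congr_fun measurableSet_Ioo hz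
        _ = 0 := lintegral_zero
  have houter : ∫⁻ t, (Ioc s T).indicator (fun t => B * (‖g t‖₊ : ℝ≥0∞) ^ (2:ℝ)) t ∂volume
      = B * ∫⁻ t in Ioo s T, (‖g t‖₊ : ℝ≥0∞) ^ (2:ℝ) ∂volume := by
    rw [lintegral_indicator measurableSet_Ioc, lintegral_const_mul' _ _ hBne,
      ← setLIntegral_congr (Ioo_ae_eq_Ioc (a := s) (b := T))]
  have hGqle : ∫⁻ τ in Ioo s T, Gq τ ∂volume
      ≤ B * ∫⁻ t in Ioo s T, (‖g t‖₊ : ℝ≥0∞) ^ (2:ℝ) ∂volume := by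
    rw [hswap, ← houter]
    exact lintegral_mono hinner
  -- Step 6: assemble
  have hABB : A * B ≤ ENNReal.ofReal (C0 * M) := by
    rw [hA, hB, ← ENNReal.ofReal_mul hAnn]
    apply ENNReal.ofReal_le_ofReal
    have : cH H * α * (M / α) = cH H * M := by field_simp
    rw [this]
    have hcH := cH_le_C0 ⟨hH1, hH2⟩
    have hcHnn : 0 ≤ cH H := Real.sqrt_nonneg _
    nlinarith
  have hfinal : ∫⁻ τ in Ioo s T, (‖GH H T g τ‖₊ : ℝ≥0∞) ^ (2:ℝ) ∂volume
      ≤ (ENNReal.ofReal (C0 * M)) ^ (2:ℝ) * ∫⁻ t in Ioo s T, (‖g t‖₊ : ℝ≥0∞) ^ (2:ℝ) ∂volume := by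
    refine hX.trans ?_
    calc A ^ (2:ℝ) * B * ∫⁻ τ in Ioo s T, Gq τ ∂volume
        ≤ A ^ (2:ℝ) * B * (B * ∫⁻ t in Ioo s T, (‖g t‖₊ : ℝ≥0∞) ^ (2:ℝ) ∂volume) :=
          mul_le_mul_right hGqle _
      _ = (A * B) ^ (2:ℝ) * ∫⁻ t in Ioo s T, (‖g t‖₊ : ℝ≥0∞) ^ (2:ℝ) ∂volume := by
          rw [ENNReal.mul_rpow_of_nonneg _ _ (by norm_num : (0:ℝ) ≤ 2)]
          have : B ^ (2:ℝ) = B * B := by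
            rw [show (2:ℝ) = ((2:ℕ):ℝ) by norm_num, ENNReal.rpow_natCast]; ring
          rw [this]; ring
      _ ≤ (ENNReal.ofReal (C0 * M)) ^ (2:ℝ) * ∫⁻ t in Ioo s T, (‖g t‖₊ : ℝ≥0∞) ^ (2:ℝ) ∂volume := by
          gcongr
  rw [eLpNorm_eq_lintegral_rpow_enorm_toReal (by norm_num) (by norm_num),
    eLpNorm_eq_lintegral_rpow_enorm_toReal (by norm_num) (by norm_num)]
  simp only [ENNReal.toReal_ofNat]
  calc (∫⁻ τ in Ioo s T, (‖GH H T g τ‖₊ : ℝ≥0∞) ^ (2:ℝ) ∂volume) ^ (1/2:ℝ)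
      ≤ ((ENNReal.ofReal (C0 * M)) ^ (2:ℝ) *
          ∫⁻ t in Ioo s T, (‖g t‖₊ : ℝ≥0∞) ^ (2:ℝ) ∂volume) ^ (1/2:ℝ) :=
        ENNReal.rpow_le_rpow hfinal (by norm_num)
    _ = ENNReal.ofReal (C0 * M) *
          (∫⁻ t in Ioo s T, (‖g t‖₊ : ℝ≥0∞) ^ (2:ℝ) ∂volume) ^ (1/2:ℝ) := by
        rw [ENNReal.mul_rpow_of_nonneg _ _ (by norm_num : (0:ℝ) ≤ 1/2), ← ENNReal.rpow_mul]
        norm_num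

theorem GH_uniform_bound (s T : ℝ) (hsT : s < T) :
    ∃ c : ℝ, 0 < c ∧
      ∀ H ∈ Set.Ioo (1/2 : ℝ) 1, ∀ g : ℝ → ℝ,
        MeasureTheory.MemLp g 2 (volume.restrict (Set.Ioo s T)) →
        eLpNorm (GH H T g) 2 (volume.restrict (Set.Ioo s T))
          ≤ ENNReal.ofReal c * eLpNorm g 2 (volume.restrict (Set.Ioo s T)) := by
  refine ⟨C0 * max 1 (Real.sqrt (T - s)), ?_, ?_⟩
  · have := C0_pos
    have h1 : (0:ℝ) < max 1 (Real.sqrt (T - s)) := lt_of_lt_of_le one_pos (le_max_left _ _)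
    positivity
  intro H hH g hg
  -- replace g by a measurable representative
  set μ := volume.restrict (Ioo s T) with hμ
  obtain ⟨g', hg'sm, hgg'⟩ := hg.aestronglyMeasurable
  have hg'm : Measurable g' := hg'sm.measurable
  have hae : ∀ᵐ t ∂(volume : Measure ℝ), t ∈ Ioo s T → g t = g' t :=
    (ae_restrict_iff' measurableSet_Ioo).1 hgg'
  have hT : ∀ᵐ t ∂(volume : Measure ℝ), t ≠ T := by
    refine ae_iff.2 ?_
    have : {a : ℝ | ¬a ≠ T} = {T} := by ext a; simp
    rw [this]
    exact measure_singleton T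
  -- GH H T g = GH H T g' on Ioo s T
  have hGH : ∀ τ ∈ Ioo s T, GH H T g τ = GH H T g' τ := by
    intro τ hτ
    unfold GH
    congr 1
    apply setIntegral_congr_ae measurableSet_Ioc
    filter_upwards [hae, hT] with t h1 h2 ht
    have : t ∈ Ioo s T := ⟨lt_trans hτ.1 ht.1, lt_of_le_of_ne ht.2 h2⟩
    rw [h1 this]
  have heq1 : eLpNorm (GH H T g) 2 μ = eLpNorm (GH H T g') 2 μ := by
    apply eLpNorm_congr_ae
    filter_upwards [ae_restrict_mem measurableSet_Ioo] with τ hτ using hGH τ hτ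
  have heq2 : eLpNorm g 2 μ = eLpNorm g' 2 μ := eLpNorm_congr_ae hgg'
  rw [heq1, heq2]
  exact main_estimate hsT hH hg'm
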